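/- Fix an integer p ≥ 1 and reals λ_1, …, λ_p > 0, a real τ > 0, and set n = Σ_{i=1}^p λ_i/(λ_i + τ), ζ_i = τ/(λ_i + τ) ∈ (0,1), and Ω = (1/n) Σ_{i=1}^p (1 − ζ_i)², so that 0 < Ω < 1. Fix β* ∈ ℝ^p with β*_i ≠ 0 for every i, and for each i define β^{s*}_i = β*_i · ((1 − ζ_i) + ζ_i · (Ω/(1 − Ω)) · (ζ_i/(1 − ζ_i)))^{-1}. Then β^{s*} = β* if and only if there exists c > 0 such that λ_i = c for all i (i.e., the covariance matrix is a multiple of the identity). -/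

import Mathlib

/-- With `ζ i = τ/(lam i + τ)` and `Ω = (1/n) ∑ (1-ζ i)²`, and ground truth
`βstar` with all coordinates nonzero, the optimal surrogate `βs` equals `βstar` iff the
covariance is a multiple of the identity, i.e. all eigenvalues `lam i` are equal to some `c > 0`. -/
theorem optimal_surrogate_eq_iff_isotropic
    (p : ℕ) (hp : 1 ≤ p)
    (lam : Fin p → ℝ) (hlam : ∀ i, 0 < lam i)
    (τ : ℝ) (hτ : 0 < τ)
    (n : ℝ) (hn : n = ∑ i, lam i / (lam i + τ))
    (ζ : Fin p → ℝ) (hζ : ∀ i, ζ i = τ / (lam i + τ))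
    (Ω : ℝ) (hΩ : Ω = (1 / n) * ∑ i, (1 - ζ i) ^ 2)
    (hΩ0 : 0 < Ω) (hΩ1 : Ω < 1)
    (βstar : Fin p → ℝ) (hβstar : ∀ i, βstar i ≠ 0)
    (βs : Fin p → ℝ)
    (hβs : ∀ i, βs i =
      βstar i * ((1 - ζ i) + ζ i * (Ω / (1 - Ω)) * (ζ i / (1 - ζ i)))⁻¹) :
    βs = βstar ↔ ∃ c : ℝ, 0 < c ∧ ∀ i, lam i = c := by
  have hlτ : ∀ i, 0 < lam i + τ := fun i => add_pos (hlam i) hτ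
  have h1Ω : 0 < 1 - Ω := by linarith
  have hζ1 : ∀ i, 1 - ζ i = lam i / (lam i + τ) := by
    intro i
    have hne := (hlτ i).ne'
    rw [hζ i]
    field_simp
    ring
  constructor
  · intro h
    refine ⟨τ * Ω / (1 - Ω), div_pos (mul_pos hτ hΩ0) h1Ω, fun i => ?_⟩
    have hb := congrFun h i
    rw [hβs i] at hb
    have hx : ((1 - ζ i) + ζ i * (Ω / (1 - Ω)) * (ζ i / (1 - ζ i)))⁻¹ = 1 :=
      mul_left_cancel₀ (hβstar i) (by rw [mul_one]; exact hb)
    have hf : (1 - ζ i) + ζ i * (Ω / (1 - Ω)) * (ζ i / (1 - ζ i)) = 1 := by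
      rw [inv_eq_one] at hx; exact hx
    rw [hζ1 i, hζ i] at hf
    have hne := (hlτ i).ne'
    have hl := (hlam i).ne'
    have h1Ω' := h1Ω.ne'
    field_simp at hf
    rw [eq_div_iff h1Ω']
    have key : (lam i + τ) * τ * (lam i * (1 - Ω) - τ * Ω) = 0 := by
      linear_combination -(lam i + τ) * hf
    rcases mul_eq_zero.mp key with h0 | h0
    · exact absurd h0 (mul_ne_zero hne hτ.ne')
    · linarith
  · rintro ⟨c, hc, hall⟩
    have hcτ : 0 < c + τ := by linarith
    have hζc : ∀ i, ζ i = τ / (c + τ) := by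
      intro i; rw [hζ i, hall i]
    have hnval : n = p * (c / (c + τ)) := by
      rw [hn, Finset.sum_congr rfl (fun i _ => by rw [hall i])]
      simp [Finset.sum_const, mul_comm]
    have hp0 : (0:ℝ) < p := by exact_mod_cast hp
    have hΩval : Ω = c / (c + τ) := by
      rw [hΩ, hnval, Finset.sum_congr rfl (fun i _ => by rw [hζ1 i, hall i])]
      simp only [Finset.sum_const, Finset.card_univ, Fintype.card_fin, nsmul_eq_mul]
      field_simp
    funext i
    rw [hβs i, hζc i, hΩval]
    have e1 : 1 - τ / (c + τ) = c / (c + τ) := by field_simp; ring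
    have e2 : 1 - c / (c + τ) = τ / (c + τ) := by field_simp; ring
    rw [e2, e1]
    have h1 : c / (c + τ) + τ / (c + τ) * (c / (c + τ) / (τ / (c + τ))) *
        (τ / (c + τ) / (c / (c + τ))) = 1 := by
      rw [div_div_div_cancel_right₀, div_div_div_cancel_right₀]
      · field_simp
      · exact hcτ.ne'
      · exact hcτ.ne'
    rw [h1, inv_one, mul_one]
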